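/- arXiv:1110.0023 — 2 statements merged into one kernel-verified Lean document; each statement's English description precedes it below -/
import Mathlib

section
/- Let P be a Horn constraint program and M a model of P. Then hset(P(Can(P,M))) ∩ M = Can(P,M), where Can(P,M) is the result of the canonical P-computation with respect to M. -/
universe u

/-- A constraint `A = (X, C)`: domain `X` and a family `C` of subsets of `X`. -/
structure Constraint (α : Type u) where
  dom : Set α
  sat : Set (Set α)
  sat_sub : ∀ Y ∈ sat, Y ⊆ dom

/-- `M ⊨ A` iff `M ∩ Dom(A) ∈ C`. -/
def Constraint.Sat {α : Type u} (M : Set α) (A : Constraint α) : Prop :=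
  M ∩ A.dom ∈ A.sat

/-- A constraint is monotone if its satisfying family is closed under supersets
within the domain. -/
def Constraint.Mono {α : Type u} (A : Constraint α) : Prop :=
  ∀ W Y : Set α, W ∈ A.sat → W ⊆ Y → Y ⊆ A.dom → Y ∈ A.sat

/-- A rule `A ← A₁,…,A_k, not(A_{k+1}),…,not(A_m)`. -/
structure Rule (α : Type u) where
  head : Constraint α
  pos : Set (Constraint α)
  neg : Set (Constraint α)

/-- A constraint program is a set of rules. -/
abbrev Program (α : Type u) := Set (Rule α)

def Rule.Horn {α : Type u} (r : Rule α) : Prop := r.neg = ∅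

def Rule.Mono {α : Type u} (r : Rule α) : Prop :=
  r.head.Mono ∧ (∀ A ∈ r.pos, A.Mono) ∧ (∀ A ∈ r.neg, A.Mono)

def Program.Horn {α : Type u} (P : Program α) : Prop := ∀ r ∈ P, r.Horn

def Program.Mono {α : Type u} (P : Program α) : Prop := ∀ r ∈ P, r.Mono

/-- `M` satisfies the body of `r`. -/
def Rule.BodySat {α : Type u} (M : Set α) (r : Rule α) : Prop :=
  (∀ A ∈ r.pos, Constraint.Sat M A) ∧ (∀ A ∈ r.neg, ¬ Constraint.Sat M A)

/-- `P(M)`: the set of `M`-applicable rules of `P`. -/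
def Program.app {α : Type u} (P : Program α) (M : Set α) : Program α :=
  {r ∈ P | r.BodySat M}

/-- `hset(r) = Dom(hd(r))`. -/
def Rule.hset {α : Type u} (r : Rule α) : Set α := r.head.dom

/-- `hset(P)`: union of the headsets of rules of `P`. -/
def Program.hset {α : Type u} (P : Program α) : Set α := ⋃ r ∈ P, r.hset

def Rule.atoms {α : Type u} (r : Rule α) : Set α :=
  r.head.dom ∪ (⋃ A ∈ r.pos, A.dom) ∪ (⋃ A ∈ r.neg, A.dom)

/-- `At(P)`: atoms occurring in domains of constraints of `P`. -/
def Program.atoms {α : Type u} (P : Program α) : Set α := ⋃ r ∈ P, r.atoms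

/-- `M` is a model of `P`. -/
def Program.IsModel {α : Type u} (P : Program α) (M : Set α) : Prop :=
  ∀ r ∈ P, r.BodySat M → Constraint.Sat M r.head

/-- `M` is a supported model of `P`. -/
def Program.Supported {α : Type u} (P : Program α) (M : Set α) : Prop :=
  P.IsModel M ∧ M ⊆ (P.app M).hset

/-- The nondeterministic one-step provability operator `T_P^nd`. -/
def Program.Tnd {α : Type u} (P : Program α) (M : Set α) : Set (Set α) :=
  {M' | M' ⊆ (P.app M).hset ∧ ∀ r ∈ P.app M, Constraint.Sat M' r.head}

/-- A `P`-computation: a transfinite sequence starting at `∅`, increasing, with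
each successor step nondeterministically one-step provable, continuous at limits. -/
structure PComputation {α : Type u} (P : Program α) where
  X : Ordinal.{u} → Set α
  zero : X 0 = ∅
  incr : ∀ o, X o ⊆ X (o + 1)
  step : ∀ o, X (o + 1) ∈ P.Tnd (X o)
  limit : ∀ o : Ordinal.{u}, Order.IsSuccLimit o → X o = ⋃ β < o, X β

/-- The result `R_t` of a computation. -/
def PComputation.result {α : Type u} {P : Program α} (t : PComputation P) : Set α :=
  ⋃ o, t.X o

/-- `M` is a derivable model of `P`: the result of some `P`-computation. -/
def Program.Derivable {α : Type u} (P : Program α) (M : Set α) : Prop :=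
  ∃ t : PComputation P, t.result = M

/-- The canonical sequence `t^{P,M}`: `X₀ = ∅`, `X_{β+1} = hset(P(X_β)) ∩ M`,
unions at limits. -/
noncomputable def canSeq {α : Type u} (P : Program α) (M : Set α) (o : Ordinal.{u}) :
    Set α :=
  Ordinal.limitRecOn o ∅ (fun _ ih => (P.app ih).hset ∩ M)
    (fun o _ ih => ⋃ β : Ordinal.{u}, ⋃ h : β < o, ih β h)

/-- `Can(P,M)`: the result of the canonical computation. -/
noncomputable def Can {α : Type u} (P : Program α) (M : Set α) : Set α :=
  ⋃ o, canSeq P M o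

/-- The reduct of a single rule: drop negated literals. -/
def Rule.pos_part {α : Type u} (r : Rule α) : Rule α := ⟨r.head, r.pos, ∅⟩

/-- The reduct `P^M`. -/
def Program.reduct {α : Type u} (P : Program α) (M : Set α) : Program α :=
  {r' | ∃ r ∈ P, (∀ A ∈ r.neg, ¬ Constraint.Sat M A) ∧ r' = r.pos_part}

/-- `M` is a stable model of `P`: a derivable model of the reduct `P^M`. -/
def Program.Stable {α : Type u} (P : Program α) (M : Set α) : Prop :=
  (P.reduct M).Derivable M

/-- `N ⊨_M P`: `N` is an `M`-maximal model of the Horn program `P`. -/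
def Program.MMax {α : Type u} (P : Program α) (M N : Set α) : Prop :=
  N ⊆ M ∧ P.IsModel N ∧ M ∩ (P.app N).hset ⊆ N

/-- `(X,Y)` is an SE-model of `P`. -/
def Program.SE {α : Type u} (P : Program α) (X Y : Set α) : Prop :=
  X ⊆ Y ∧ P.IsModel Y ∧ (P.reduct Y).MMax Y X

/-- `(X,Y)` is a UE-model of `P`. -/
def Program.UE {α : Type u} (P : Program α) (X Y : Set α) : Prop :=
  P.SE X Y ∧ ∀ X', P.SE X' Y → X ⊆ X' → X = X' ∨ X' = Y

/-- Strong equivalence of monotone-constraint programs. -/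
def StrongEq {α : Type u} (P Q : Program α) : Prop :=
  ∀ R : Program α, R.Mono → ∀ M : Set α, (P ∪ R).Stable M ↔ (Q ∪ R).Stable M

/-- The rule `(D,{D}) ←`. -/
def factRule {α : Type u} (D : Set α) : Rule α :=
  ⟨⟨D, {D}, fun Y hY => by simp only [Set.mem_singleton_iff] at hY; simp [hY]⟩, ∅, ∅⟩

/-- Uniform equivalence of monotone-constraint programs. -/
def UnifEq {α : Type u} (P Q : Program α) : Prop :=
  ∀ D : Set α, ∀ M : Set α,
    (P ∪ {factRule D}).Stable M ↔ (Q ∪ {factRule D}).Stable M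

/-- `P` is tight on `M`. -/
def Program.Tight {α : Type u} (P : Program α) (M : Set α) : Prop :=
  ∃ lam : α → Ordinal.{u}, ∀ r ∈ P.app M, ∀ x ∈ M ∩ r.hset,
    ∀ a ∈ M ∩ (⋃ A ∈ r.pos, A.dom), lam a < lam x


-- auxiliary lemmas to be inserted above the theorem
section CanFixAux

variable {α : Type u}

lemma canSeq_zero (P : Program α) (M : Set α) : canSeq P M 0 = ∅ :=
  Ordinal.limitRecOn_zero _ _ _

lemma canSeq_succ (P : Program α) (M : Set α) (o : Ordinal.{u}) :
    canSeq P M (o + 1) = (P.app (canSeq P M o)).hset ∩ M := by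
  rw [canSeq, Ordinal.add_one_eq_succ, Ordinal.limitRecOn_succ]
  rfl

lemma canSeq_limit (P : Program α) (M : Set α) (o : Ordinal.{u}) (h : Order.IsSuccLimit o) :
    canSeq P M o = ⋃ β < o, canSeq P M β := by
  rw [canSeq, Ordinal.limitRecOn_limit _ _ _ _ h]
  rfl

lemma app_mono (P : Program α) (hHorn : P.Horn) (hMono : P.Mono) {N N' : Set α}
    (h : N ⊆ N') : P.app N ⊆ P.app N' := by
  rintro r ⟨hrP, hpos, hneg⟩
  refine ⟨hrP, fun A hA => ?_, fun A hA => ?_⟩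
  · have hAm : A.Mono := (hMono r hrP).2.1 A hA
    exact hAm _ _ (hpos A hA) (Set.inter_subset_inter_left _ h) Set.inter_subset_right
  · exact absurd (hHorn r hrP ▸ hA) (Set.notMem_empty A)

lemma hset_mono {P Q : Program α} (h : P ⊆ Q) : P.hset ⊆ Q.hset := by
  intro x hx
  simp only [Program.hset, Set.mem_iUnion] at hx ⊢
  obtain ⟨r, hr, hx⟩ := hx
  exact ⟨r, h hr, hx⟩

lemma canSeq_le_succ (P : Program α) (hHorn : P.Horn) (hMono : P.Mono) (M : Set α)
    (o : Ordinal.{u}) : canSeq P M o ⊆ canSeq P M (o + 1) := by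
  induction o using Ordinal.induction with
  | h o IH =>
    rcases Ordinal.zero_or_succ_or_isSuccLimit o with h0 | ⟨a, ha⟩ | hl
    · subst h0; rw [canSeq_zero]; exact Set.empty_subset _
    · subst ha
      rw [← Ordinal.add_one_eq_succ, canSeq_succ, canSeq_succ]
      exact Set.inter_subset_inter_left _
        (hset_mono (app_mono P hHorn hMono (IH a (by simp [← Ordinal.add_one_eq_succ]))))
    · rw [canSeq_limit P M o hl, canSeq_succ]
      intro x hx
      simp only [Set.mem_iUnion] at hx
      obtain ⟨β, hβ, hx⟩ := hx
      have h1 : x ∈ canSeq P M (β + 1) := IH β hβ hx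
      rw [canSeq_succ] at h1
      refine ⟨hset_mono (app_mono P hHorn hMono ?_) h1.1, h1.2⟩
      rw [canSeq_limit P M o hl]
      exact Set.subset_biUnion_of_mem hβ

lemma canSeq_mono (P : Program α) (hHorn : P.Horn) (hMono : P.Mono) (M : Set α)
    {β γ : Ordinal.{u}} (h : β ≤ γ) : canSeq P M β ⊆ canSeq P M γ := by
  induction γ using Ordinal.induction with
  | h γ IH =>
    rcases eq_or_lt_of_le h with rfl | hlt
    · exact subset_rfl
    rcases Ordinal.zero_or_succ_or_isSuccLimit γ with h0 | ⟨a, ha⟩ | hl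
    · subst h0; exact absurd hlt (not_lt_zero (a := β))
    · subst ha
      have hle : β ≤ a := Order.lt_succ_iff.mp hlt
      have := IH a (Order.lt_succ a) hle
      rw [← Ordinal.add_one_eq_succ]
      exact this.trans (canSeq_le_succ P hHorn hMono M a)
    · rw [canSeq_limit P M γ hl]
      exact Set.subset_biUnion_of_mem hlt

lemma canSeq_subset_Can (P : Program α) (M : Set α) (o : Ordinal.{u}) :
    canSeq P M o ⊆ Can P M := Set.subset_iUnion (canSeq P M) o

lemma exists_fixed (P : Program α) (hHorn : P.Horn) (hMono : P.Mono) (M : Set α) :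
    ∃ o : Ordinal.{u}, canSeq P M (o + 1) = canSeq P M o := by
  by_contra hcon
  push_neg at hcon
  have hinj : Function.Injective (canSeq P M) := by
    have hss : ∀ {β γ : Ordinal.{u}}, β < γ → canSeq P M β ⊂ canSeq P M γ := by
      intro β γ hlt
      refine ssubset_of_ssubset_of_subset ?_
        (canSeq_mono P hHorn hMono M (Order.add_one_le_of_lt hlt))
      exact (canSeq_le_succ P hHorn hMono M β).ssubset_of_ne (hcon β).symm
    intro β γ hβγ
    rcases lt_trichotomy β γ with h | h | h
    · exact absurd hβγ (hss h).ne
    · exact h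
    · exact absurd hβγ.symm (hss h).ne
  exact not_small_ordinal.{u, u} (small_of_injective hinj)

theorem canSeq_eventually_const (P : Program α) (hHorn : P.Horn) (hMono : P.Mono)
    (M : Set α) {o : Ordinal.{u}} (hfix : canSeq P M (o + 1) = canSeq P M o)
    {γ : Ordinal.{u}} (h : o ≤ γ) : canSeq P M γ = canSeq P M o := by
  induction γ using Ordinal.induction with
  | h γ IH =>
    rcases eq_or_lt_of_le h with rfl | hlt
    · rfl
    rcases Ordinal.zero_or_succ_or_isSuccLimit γ with h0 | ⟨a, ha⟩ | hl
    · subst h0; exact absurd hlt (not_lt_zero (a := o))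
    · subst ha
      have hle : o ≤ a := Order.lt_succ_iff.mp hlt
      have ha' : canSeq P M a = canSeq P M o := IH a (Order.lt_succ a) hle
      rw [← Ordinal.add_one_eq_succ, canSeq_succ, ← hfix, canSeq_succ, ha']
    · rw [canSeq_limit P M γ hl]
      apply Set.Subset.antisymm
      · intro x hx
        simp only [Set.mem_iUnion] at hx
        obtain ⟨β, hβ, hx⟩ := hx
        rcases le_or_gt β o with hle | hltβ
        · exact canSeq_mono P hHorn hMono M hle hx
        · rw [IH β hβ hltβ.le] at hx; exact hx
      · exact Set.subset_biUnion_of_mem hlt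

lemma Can_eq_fixed (P : Program α) (hHorn : P.Horn) (hMono : P.Mono) (M : Set α)
    {o : Ordinal.{u}} (hfix : canSeq P M (o + 1) = canSeq P M o) :
    Can P M = canSeq P M o := by
  apply Set.Subset.antisymm
  · intro x hx
    simp only [Can, Set.mem_iUnion] at hx
    obtain ⟨β, hx⟩ := hx
    rcases le_or_gt β o with hle | hltβ
    · exact canSeq_mono P hHorn hMono M hle hx
    · rw [canSeq_eventually_const P hHorn hMono M hfix hltβ.le] at hx; exact hx
  · exact canSeq_subset_Can P M o

end CanFixAux

/-- Fixpoint property of the canonical computation. -/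
theorem canonical_fixpoint {α : Type u} (P : Program α) (hHorn : P.Horn)
    (hMono : P.Mono) (M : Set α) (hMod : P.IsModel M) :
    (P.app (Can P M)).hset ∩ M = Can P M := by
  obtain ⟨o, hfix⟩ := exists_fixed P hHorn hMono M
  have hCan : Can P M = canSeq P M o := Can_eq_fixed P hHorn hMono M hfix
  rw [hCan, ← canSeq_succ, hfix]
end

section
/- Two monotone-constraint programs P and Q are strongly equivalent if and only if SE(P) = SE(Q). -/
universe u

section AuxSE

variable {α : Type u}

lemma Constraint.sat_mono' {A : Constraint α} (hA : A.Mono) {X Y : Set α}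
    (h : Constraint.Sat X A) (hXY : X ⊆ Y) : Constraint.Sat Y A :=
  hA _ _ h (Set.inter_subset_inter_left _ hXY) Set.inter_subset_right

lemma bodySat_mono' {r : Rule α} (hr : r.Horn) (hm : r.Mono) {X Y : Set α}
    (hXY : X ⊆ Y) (h : r.BodySat X) : r.BodySat Y := by
  refine ⟨fun A hA => Constraint.sat_mono' (hm.2.1 A hA) (h.1 A hA) hXY, ?_⟩
  intro A hA
  rw [Rule.Horn] at hr
  rw [hr] at hA
  exact absurd hA (Set.notMem_empty A)

lemma app_mono' {H : Program α} (hH : H.Horn) (hm : H.Mono) {X Y : Set α} (hXY : X ⊆ Y) :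
    H.app X ⊆ H.app Y :=
  fun r hr => ⟨hr.1, bodySat_mono' (hH r hr.1) (hm r hr.1) hXY hr.2⟩

lemma hset_subset' {H₁ H₂ : Program α} (h : H₁ ⊆ H₂) : H₁.hset ⊆ H₂.hset := by
  intro a ha
  simp only [Program.hset, Set.mem_iUnion] at ha ⊢
  obtain ⟨r, hr, hra⟩ := ha
  exact ⟨r, h hr, hra⟩

lemma mem_hset' {H : Program α} {r : Rule α} (hr : r ∈ H) : r.hset ⊆ H.hset := by
  intro a ha
  simp only [Program.hset, Set.mem_iUnion]
  exact ⟨r, hr, ha⟩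

lemma sat_inter' {A : Constraint α} {S M : Set α} (hdom : A.dom ⊆ S)
    (hM : Constraint.Sat M A) : Constraint.Sat (S ∩ M) A := by
  have h : (S ∩ M) ∩ A.dom = M ∩ A.dom := by
    ext a
    constructor
    · rintro ⟨⟨-, hM'⟩, hd⟩; exact ⟨hM', hd⟩
    · rintro ⟨hM', hd⟩; exact ⟨⟨hdom hd, hM'⟩, hd⟩
  rw [Constraint.Sat] at hM ⊢
  rw [h]
  exact hM

lemma seq_mono' (X : Ordinal.{u} → Set α)
    (hs : ∀ o, X o ⊆ X (o + 1))
    (hlim : ∀ o : Ordinal.{u}, Order.IsSuccLimit o → X o = ⋃ β < o, X β) :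
    ∀ b a : Ordinal.{u}, a ≤ b → X a ⊆ X b := by
  intro b
  induction b using Ordinal.induction with
  | _ b IH =>
    rcases Ordinal.zero_or_succ_or_isSuccLimit b with rfl | ⟨c, rfl⟩ | hb
    · intro a ha
      rw [nonpos_iff_eq_zero.mp ha]
    · intro a ha
      rcases ha.lt_or_eq with h | h
      · rw [Order.lt_succ_iff] at h
        refine (IH c (Order.lt_succ c) a h).trans ?_
        rw [← Ordinal.add_one_eq_succ]
        exact hs c
      · rw [h]
    · intro a ha
      rcases ha.lt_or_eq with h | h
      · rw [hlim b hb]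
        intro x hx
        exact Set.mem_iUnion₂.mpr ⟨a, h, hx⟩
      · rw [h]

lemma iter_mono' (F : Set α → Set α) (hF : Monotone F) (X : Ordinal.{u} → Set α)
    (h0 : X 0 = ∅) (hs : ∀ o, X (o + 1) = F (X o))
    (hlim : ∀ o : Ordinal.{u}, Order.IsSuccLimit o → X o = ⋃ β < o, X β) :
    ∀ b a : Ordinal.{u}, a ≤ b → X a ⊆ X b := by
  intro b
  induction b using Ordinal.induction with
  | _ b IH =>
    rcases Ordinal.zero_or_succ_or_isSuccLimit b with rfl | ⟨c, rfl⟩ | hb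
    · intro a ha
      rw [nonpos_iff_eq_zero.mp ha]
    · have hcs : X c ⊆ X (Order.succ c) := by
        rw [← Ordinal.add_one_eq_succ, hs c]
        rcases Ordinal.zero_or_succ_or_isSuccLimit c with rfl | ⟨d, rfl⟩ | hc
        · rw [h0]; exact Set.empty_subset _
        · have h1 : X d ⊆ X (Order.succ d) :=
            IH (Order.succ d) (Order.succ_lt_succ (Order.lt_succ d)) d (Order.lt_succ d).le
          conv_lhs => rw [← Ordinal.add_one_eq_succ, hs d]
          exact hF h1
        · have hcb : c < Order.succ c := Order.lt_succ c
          conv_lhs => rw [hlim c hc]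
          refine Set.iUnion₂_subset fun β hβ => ?_
          have h1 : X β ⊆ X (β + 1) := by
            rw [Ordinal.add_one_eq_succ]
            exact IH (Order.succ β) (lt_trans (hc.succ_lt hβ) hcb) β (Order.lt_succ β).le
          rw [hs β] at h1
          exact h1.trans (hF (IH c hcb β hβ.le))
      intro a ha
      rcases ha.lt_or_eq with h | h
      · rw [Order.lt_succ_iff] at h
        exact (IH c (Order.lt_succ c) a h).trans hcs
      · rw [h]
    · intro a ha
      rcases ha.lt_or_eq with h | h
      · rw [hlim b hb]
        intro x hx
        exact Set.mem_iUnion₂.mpr ⟨a, h, hx⟩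
      · rw [h]

lemma exists_stab' (X : Ordinal.{u} → Set α) (hX : ∀ b a : Ordinal.{u}, a ≤ b → X a ⊆ X b) :
    ∃ o, (⋃ i, X i) = X o := by
  classical
  choose f hf using fun a : (⋃ i, X i : Set α) => Set.mem_iUnion.mp a.2
  refine ⟨⨆ a, f a, Set.Subset.antisymm ?_ (Set.subset_iUnion X _)⟩
  intro a ha
  exact hX _ _ (Ordinal.le_iSup f ⟨a, ha⟩) (hf ⟨a, ha⟩)

lemma reduct_horn' (P : Program α) (M : Set α) : (P.reduct M).Horn := by
  rintro r' ⟨r, hr, hneg, rfl⟩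
  rfl

lemma reduct_mono' {P : Program α} (hP : P.Mono) (M : Set α) : (P.reduct M).Mono := by
  rintro r' ⟨r, hr, hneg, rfl⟩
  exact ⟨(hP r hr).1, (hP r hr).2.1, fun A hA => absurd hA (Set.notMem_empty A)⟩

lemma pos_part_eq' {r : Rule α} (h : r.Horn) : r.pos_part = r := by
  cases r
  rw [Rule.Horn] at h
  simp only [Rule.pos_part, Rule.mk.injEq, true_and] at h ⊢
  exact h.symm

lemma reduct_of_horn' {H : Program α} (hH : H.Horn) (M : Set α) : H.reduct M = H := by
  ext r'
  constructor
  · rintro ⟨r, hr, -, rfl⟩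
    rw [pos_part_eq' (hH r hr)]
    exact hr
  · intro hr
    refine ⟨r', hr, ?_, (pos_part_eq' (hH r' hr)).symm⟩
    intro A hA
    rw [hH r' hr] at hA
    exact absurd hA (Set.notMem_empty A)

lemma isModel_reduct_iff' {P : Program α} {M : Set α} :
    (P.reduct M).IsModel M ↔ P.IsModel M := by
  constructor
  · intro h r hr hb
    exact h r.pos_part ⟨r, hr, hb.2, rfl⟩ ⟨hb.1, fun A hA => absurd hA (Set.notMem_empty A)⟩
  · rintro h r' ⟨r, hr, hneg, rfl⟩ hb
    exact h r hr ⟨hb.1, hneg⟩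

lemma isModel_union' {P R : Program α} {M : Set α} :
    (P ∪ R).IsModel M ↔ P.IsModel M ∧ R.IsModel M := by
  constructor
  · exact fun h => ⟨fun r hr => h r (Or.inl hr), fun r hr => h r (Or.inr hr)⟩
  · rintro ⟨h1, h2⟩ r (hr | hr) hb
    exacts [h1 r hr hb, h2 r hr hb]

lemma reduct_union' (P R : Program α) (M : Set α) :
    (P ∪ R).reduct M = P.reduct M ∪ R.reduct M := by
  ext r'
  constructor
  · rintro ⟨r, (hr | hr), hneg, rfl⟩
    exacts [Or.inl ⟨r, hr, hneg, rfl⟩, Or.inr ⟨r, hr, hneg, rfl⟩]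
  · rintro (⟨r, hr, hneg, rfl⟩ | ⟨r, hr, hneg, rfl⟩)
    exacts [⟨r, Or.inl hr, hneg, rfl⟩, ⟨r, Or.inr hr, hneg, rfl⟩]

lemma app_union' (P R : Program α) (M : Set α) :
    (P ∪ R).app M = P.app M ∪ R.app M := by
  ext r
  constructor
  · rintro ⟨(hr | hr), hb⟩
    exacts [Or.inl ⟨hr, hb⟩, Or.inr ⟨hr, hb⟩]
  · rintro (⟨hr, hb⟩ | ⟨hr, hb⟩)
    exacts [⟨Or.inl hr, hb⟩, ⟨Or.inr hr, hb⟩]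

lemma hset_union' (P R : Program α) : (P ∪ R).hset = P.hset ∪ R.hset := by
  ext a
  simp only [Program.hset, Set.mem_iUnion, Set.mem_union]
  constructor
  · rintro ⟨r, (hr | hr), ha⟩
    exacts [Or.inl ⟨r, hr, ha⟩, Or.inr ⟨r, hr, ha⟩]
  · rintro (⟨r, hr, ha⟩ | ⟨r, hr, ha⟩)
    exacts [⟨r, Or.inl hr, ha⟩, ⟨r, Or.inr hr, ha⟩]

lemma mmax_union' {P R : Program α} {M X : Set α} :
    (P ∪ R).MMax M X ↔ P.MMax M X ∧ R.MMax M X := by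
  rw [Program.MMax, Program.MMax, Program.MMax, isModel_union', app_union', hset_union']
  constructor
  · rintro ⟨h1, ⟨h2, h3⟩, h4⟩
    exact ⟨⟨h1, h2, fun a ha => h4 ⟨ha.1, Or.inl ha.2⟩⟩,
      ⟨h1, h3, fun a ha => h4 ⟨ha.1, Or.inr ha.2⟩⟩⟩
  · rintro ⟨⟨h1, h2, h4⟩, ⟨-, h3, h5⟩⟩
    refine ⟨h1, ⟨h2, h3⟩, ?_⟩
    rintro a ⟨haM, (h | h)⟩
    exacts [h4 ⟨haM, h⟩, h5 ⟨haM, h⟩]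

lemma se_union' {P R : Program α} {X Y : Set α} :
    (P ∪ R).SE X Y ↔ P.SE X Y ∧ R.SE X Y := by
  rw [Program.SE, Program.SE, Program.SE, isModel_union', reduct_union', mmax_union']
  tauto

lemma mono_union' {P R : Program α} (hP : P.Mono) (hR : R.Mono) : (P ∪ R).Mono := by
  rintro r (hr | hr)
  exacts [hP r hr, hR r hr]

lemma derivable_iff' {H : Program α} (hH : H.Horn) (hm : H.Mono) (M : Set α) :
    H.Derivable M ↔ H.IsModel M ∧ ∀ X, H.MMax M X → X = M := by
  constructor
  · rintro ⟨t, rfl⟩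
    have hmono : ∀ b a : Ordinal.{u}, a ≤ b → t.X a ⊆ t.X b := seq_mono' t.X t.incr t.limit
    obtain ⟨o, ho⟩ := exists_stab' t.X hmono
    have hres : t.result = t.X o := ho
    have hXo1 : t.X (o + 1) = t.X o :=
      Set.Subset.antisymm ((Set.subset_iUnion t.X (o + 1)).trans ho.subset) (t.incr o)
    obtain ⟨hsub, hsat⟩ := t.step o
    constructor
    · intro r hr hb
      rw [hres] at hb ⊢
      have := hsat r ⟨hr, hb⟩
      rwa [hXo1] at this
    · rintro X ⟨hXM, hXmod, hXmax⟩
      refine Set.Subset.antisymm hXM ?_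
      have key : ∀ j : Ordinal.{u}, t.X j ⊆ X := by
        intro j
        induction j using Ordinal.induction with
        | _ j IH =>
          rcases Ordinal.zero_or_succ_or_isSuccLimit j with rfl | ⟨c, rfl⟩ | h
          · rw [t.zero]
            exact Set.empty_subset X
          · rw [← Ordinal.add_one_eq_succ]
            have hc : t.X c ⊆ X := IH c (Order.lt_succ c)
            have h1 : t.X (c + 1) ⊆ (H.app (t.X c)).hset := (t.step c).1
            have h2 : H.app (t.X c) ⊆ H.app X := app_mono' hH hm hc
            have h3 : t.X (c + 1) ⊆ t.result := Set.subset_iUnion t.X (c + 1)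
            intro a ha
            exact hXmax ⟨h3 ha, hset_subset' h2 (h1 ha)⟩
          · rw [t.limit j h]
            exact Set.iUnion₂_subset fun β hβ => IH β hβ
      exact Set.iUnion_subset key
  · rintro ⟨hmodel, huniq⟩
    have h0 : canSeq H M 0 = ∅ := Ordinal.limitRecOn_zero _ _ _
    have hs : ∀ o : Ordinal.{u},
        canSeq H M (o + 1) = (H.app (canSeq H M o)).hset ∩ M := by
      intro o
      rw [Ordinal.add_one_eq_succ]
      exact Ordinal.limitRecOn_succ _ _ _ _
    have hl : ∀ o : Ordinal.{u}, Order.IsSuccLimit o → canSeq H M o = ⋃ β < o, canSeq H M β := by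
      intro o ho
      exact Ordinal.limitRecOn_limit _ _ _ _ ho
    have hF : Monotone fun S => (H.app S).hset ∩ M := fun S T hST =>
      Set.inter_subset_inter_left M (hset_subset' (app_mono' hH hm hST))
    have hmono : ∀ b a : Ordinal.{u}, a ≤ b → canSeq H M a ⊆ canSeq H M b :=
      iter_mono' _ hF (canSeq H M) h0 hs hl
    have hsubM : ∀ o : Ordinal.{u}, canSeq H M o ⊆ M := by
      intro o
      induction o using Ordinal.induction with
      | _ j IH =>
        rcases Ordinal.zero_or_succ_or_isSuccLimit j with rfl | ⟨c, rfl⟩ | h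
        · rw [h0]; exact Set.empty_subset M
        · rw [← Ordinal.add_one_eq_succ, hs]
          exact Set.inter_subset_right
        · rw [hl j h]
          exact Set.iUnion₂_subset fun β hβ => IH β hβ
    obtain ⟨o, ho⟩ := exists_stab' (canSeq H M) hmono
    have hfix : (H.app (canSeq H M o)).hset ∩ M = canSeq H M o := by
      rw [← hs o]
      refine Set.Subset.antisymm ((Set.subset_iUnion (canSeq H M) (o + 1)).trans ho.subset) ?_
      refine hmono (o + 1) o ?_
      rw [Ordinal.add_one_eq_succ]
      exact (Order.lt_succ o).le
    have hCM : canSeq H M o ⊆ M := hsubM o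
    have hCmod : H.IsModel (canSeq H M o) := by
      intro r hr hb
      have hrapp : r ∈ H.app (canSeq H M o) := ⟨hr, hb⟩
      have hbM : r.BodySat M := bodySat_mono' (hH r hr) (hm r hr) hCM hb
      have hsatM : Constraint.Sat M r.head := hmodel r hr hbM
      have := sat_inter' (mem_hset' hrapp) hsatM
      rwa [hfix] at this
    have hCmax : M ∩ (H.app (canSeq H M o)).hset ⊆ canSeq H M o := by
      intro a ha
      rw [← hfix]
      exact ⟨ha.2, ha.1⟩
    have hCeq : canSeq H M o = M := huniq _ ⟨hCM, hCmod, hCmax⟩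
    refine ⟨⟨canSeq H M, h0, ?_, ?_, hl⟩, ?_⟩
    · intro o'
      refine hmono (o' + 1) o' ?_
      rw [Ordinal.add_one_eq_succ]
      exact (Order.lt_succ o').le
    · intro o'
      constructor
      · rw [hs o']
        exact Set.inter_subset_left
      · intro r hr
        rw [hs o']
        have hbM : r.BodySat M := bodySat_mono' (hH r hr.1) (hm r hr.1) (hsubM o') hr.2
        exact sat_inter' (mem_hset' hr) (hmodel r hr.1 hbM)
    · show (⋃ i, canSeq H M i) = M
      rw [ho]
      exact hCeq

lemma mmax_self_iff' {H : Program α} {M : Set α} : H.MMax M M ↔ H.IsModel M :=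
  ⟨fun h => h.2.1, fun h => ⟨Set.Subset.rfl, h, Set.inter_subset_left⟩⟩

lemma se_self_iff' {P : Program α} {M : Set α} : P.SE M M ↔ P.IsModel M := by
  rw [Program.SE, mmax_self_iff', isModel_reduct_iff']
  tauto

lemma stable_iff_se' {P : Program α} (hP : P.Mono) (M : Set α) :
    P.Stable M ↔ P.SE M M ∧ ∀ X, P.SE X M → X = M := by
  rw [Program.Stable, derivable_iff' (reduct_horn' P M) (reduct_mono' hP M) M,
    se_self_iff', isModel_reduct_iff']
  constructor
  · rintro ⟨h1, h2⟩
    exact ⟨h1, fun X hX => h2 X hX.2.2⟩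
  · rintro ⟨h1, h2⟩
    exact ⟨h1, fun X hX => h2 X ⟨hX.1, h1, hX⟩⟩

lemma sat_factRule_head' {D M : Set α} : Constraint.Sat M (factRule D).head ↔ D ⊆ M := by
  rw [Constraint.Sat]
  show M ∩ D ∈ ({D} : Set (Set α)) ↔ D ⊆ M
  rw [Set.mem_singleton_iff, Set.inter_eq_right]

lemma factRule_bodySat' (D M : Set α) : (factRule D).BodySat M :=
  ⟨fun A hA => absurd hA (Set.notMem_empty A), fun A hA => absurd hA (Set.notMem_empty A)⟩

lemma constraint_fact_mono' (D : Set α) : (factRule D).head.Mono := by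
  intro W Z hW hWZ hZD
  show Z ∈ ({D} : Set (Set α))
  have hW' : W = D := hW
  rw [Set.mem_singleton_iff]
  exact Set.Subset.antisymm hZD (hW' ▸ hWZ)

lemma factRule_mono' (D : Set α) : (factRule D).Mono :=
  ⟨constraint_fact_mono' D, fun A hA => absurd hA (Set.notMem_empty A),
    fun A hA => absurd hA (Set.notMem_empty A)⟩

/-- The rule `(Y,{Y}) ← ({y},{{y}})`. -/
def yrule' (Y : Set α) (y : α) : Rule α := ⟨(factRule Y).head, {(factRule {y}).head}, ∅⟩

lemma yrule_mono' (Y : Set α) (y : α) : (yrule' Y y).Mono := by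
  refine ⟨constraint_fact_mono' Y, ?_, fun A hA => absurd hA (Set.notMem_empty A)⟩
  intro A hA
  have hA' : A ∈ ({(factRule ({y} : Set α)).head} : Set (Constraint α)) := hA
  rw [Set.mem_singleton_iff] at hA'
  subst hA' 
  exact constraint_fact_mono' {y}

lemma yrule_bodySat' {Y : Set α} {y : α} {M : Set α} :
    (yrule' Y y).BodySat M ↔ y ∈ M := by
  constructor
  · intro h
    have := h.1 _ (Set.mem_singleton _)
    rw [sat_factRule_head'] at this
    exact this (Set.mem_singleton y)
  · intro h
    refine ⟨?_, fun A hA => absurd hA (Set.notMem_empty A)⟩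
    intro A hA
    have hA' : A ∈ ({(factRule ({y} : Set α)).head} : Set (Constraint α)) := hA
    rw [Set.mem_singleton_iff] at hA'
    subst hA'
    rw [sat_factRule_head']
    exact Set.singleton_subset_iff.mpr h

lemma se_of_strongEq' {P Q : Program α} (hP : P.Mono) (hQ : Q.Mono)
    (h : StrongEq P Q) {X Y : Set α} (hXY : P.SE X Y) : Q.SE X Y := by
  classical
  obtain ⟨hXsubY, hYP, hmax⟩ := hXY
  have hR0mono : ({factRule Y} : Program α).Mono := by
    rintro r hr
    rw [Set.mem_singleton_iff] at hr
    subst hr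
    exact factRule_mono' Y
  have hR0horn : ({factRule Y} : Program α).Horn := by
    rintro r hr
    rw [Set.mem_singleton_iff] at hr
    subst hr
    rfl
  have hR0model : ({factRule Y} : Program α).IsModel Y := by
    intro r hr hb
    rw [Set.mem_singleton_iff] at hr
    subst hr
    rw [sat_factRule_head']
  have hPR0stable : (P ∪ {factRule Y}).Stable Y := by
    rw [stable_iff_se' (mono_union' hP hR0mono)]
    constructor
    · rw [se_self_iff', isModel_union']
      exact ⟨hYP, hR0model⟩
    · intro Z hZ
      rw [se_union'] at hZ
      obtain ⟨hZsubY, -, hZmm⟩ := hZ.2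
      rw [reduct_of_horn' hR0horn] at hZmm
      obtain ⟨-, hZmod, -⟩ := hZmm
      have := hZmod (factRule Y) rfl (factRule_bodySat' Y Z)
      rw [sat_factRule_head'] at this
      exact Set.Subset.antisymm hZsubY this
  have hQYstable : (Q ∪ {factRule Y}).Stable Y := (h _ hR0mono Y).mp hPR0stable
  have hQY : Q.IsModel Y := by
    rw [stable_iff_se' (mono_union' hQ hR0mono)] at hQYstable
    have h1 := hQYstable.1
    rw [se_self_iff', isModel_union'] at h1
    exact h1.1
  by_cases hXeqY : X = Y
  · subst hXeqY
    rw [se_self_iff']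
    exact hQY
  · by_contra hnQ
    set R : Program α := insert (factRule X) ((fun y => yrule' Y y) '' (Y \ X)) with hRdef
    have memR : ∀ r : Rule α, r ∈ R ↔ r = factRule X ∨ ∃ y ∈ Y \ X, r = yrule' Y y := by
      intro r
      rw [hRdef, Set.mem_insert_iff, Set.mem_image]
      constructor
      · rintro (h' | ⟨y, hy, rfl⟩)
        exacts [Or.inl h', Or.inr ⟨y, hy, rfl⟩]
      · rintro (h' | ⟨y, hy, rfl⟩)
        exacts [Or.inl h', Or.inr ⟨y, hy, rfl⟩]
    have hRmono : R.Mono := by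
      intro r hr
      rcases (memR r).mp hr with rfl | ⟨y, hy, rfl⟩
      exacts [factRule_mono' X, yrule_mono' Y y]
    have hRhorn : R.Horn := by
      intro r hr
      rcases (memR r).mp hr with rfl | ⟨y, hy, rfl⟩
      exacts [rfl, rfl]
    have hredR : R.reduct Y = R := reduct_of_horn' hRhorn Y
    have hRY : R.IsModel Y := by
      intro r hr hb
      rcases (memR r).mp hr with rfl | ⟨y, hy, rfl⟩
      · rw [sat_factRule_head']
        exact hXsubY
      · show Constraint.Sat Y (factRule Y).head
        rw [sat_factRule_head']
    have hQRstable : (Q ∪ R).Stable Y := by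
      rw [stable_iff_se' (mono_union' hQ hRmono)]
      refine ⟨by rw [se_self_iff', isModel_union']; exact ⟨hQY, hRY⟩, ?_⟩
      intro Z hZ
      rw [se_union'] at hZ
      have hZQ := hZ.1
      obtain ⟨hZsubY, -, hZmm⟩ := hZ.2
      rw [hredR] at hZmm
      obtain ⟨-, hZmod, -⟩ := hZmm
      have hXZ : X ⊆ Z := by
        have := hZmod (factRule X) ((memR _).mpr (Or.inl rfl)) (factRule_bodySat' X Z)
        rwa [sat_factRule_head'] at this
      by_cases hZX : Z = X
      · exact absurd (hZX ▸ hZQ) hnQ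
      · obtain ⟨y, hyZ, hyX⟩ : ∃ y, y ∈ Z ∧ y ∉ X := by
          by_contra hc
          push_neg at hc
          exact hZX (Set.Subset.antisymm hc hXZ)
        have := hZmod (yrule' Y y) ((memR _).mpr (Or.inr ⟨y, ⟨hZsubY hyZ, hyX⟩, rfl⟩))
          (yrule_bodySat'.mpr hyZ)
        have this' : Constraint.Sat Z (factRule Y).head := this
        rw [sat_factRule_head'] at this'
        exact Set.Subset.antisymm hZsubY this' 
    have hPRstable : (P ∪ R).Stable Y := (h R hRmono Y).mpr hQRstable
    have hPRse : (P ∪ R).SE X Y := by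
      rw [se_union']
      refine ⟨⟨hXsubY, hYP, hmax⟩, hXsubY, hRY, ?_⟩
      rw [hredR]
      refine ⟨hXsubY, ?_, ?_⟩
      · intro r hr hb
        rcases (memR r).mp hr with rfl | ⟨y, hy, rfl⟩
        · rw [sat_factRule_head']
        · exact absurd (yrule_bodySat'.mp hb) hy.2
      · rintro a ⟨haY, ha⟩
        simp only [Program.hset, Set.mem_iUnion] at ha
        obtain ⟨r, ⟨hrR, hrb⟩, hra⟩ := ha
        rcases (memR r).mp hrR with rfl | ⟨y, hy, rfl⟩
        · exact hra
        · exact absurd (yrule_bodySat'.mp hrb) hy.2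
    rw [stable_iff_se' (mono_union' hP hRmono)] at hPRstable
    exact hXeqY (hPRstable.2 X hPRse)

end AuxSE

/-- Strong equivalence is characterized by equality of SE-models. -/
theorem strong_equiv_iff_se {α : Type u} (P Q : Program α) (hP : P.Mono) (hQ : Q.Mono) :
    StrongEq P Q ↔ ∀ X Y : Set α, P.SE X Y ↔ Q.SE X Y := by
  constructor
  · intro h X Y
    have h' : StrongEq Q P := fun R hR M => (h R hR M).symm
    exact ⟨se_of_strongEq' hP hQ h, se_of_strongEq' hQ hP h'⟩
  · intro h R hR M
    rw [stable_iff_se' (mono_union' hP hR), stable_iff_se' (mono_union' hQ hR)]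
    have key : ∀ P' Q' : Program α, (∀ X Y : Set α, P'.SE X Y ↔ Q'.SE X Y) →
        ((P' ∪ R).SE M M ∧ ∀ X, (P' ∪ R).SE X M → X = M) →
        ((Q' ∪ R).SE M M ∧ ∀ X, (Q' ∪ R).SE X M → X = M) := by
      rintro P' Q' hse ⟨h1, h2⟩
      rw [se_union'] at h1
      refine ⟨se_union'.mpr ⟨(hse M M).mp h1.1, h1.2⟩, fun X hX => ?_⟩
      rw [se_union'] at hX
      exact h2 X (se_union'.mpr ⟨(hse X M).mpr hX.1, hX.2⟩)
    exact ⟨key P Q h, key Q P fun X Y => (h X Y).symm⟩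
end
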